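/- Let p > 1 and define S : C_D([0,1]) → ℝ ∪ {+∞} by S(v) = (1/2)∫₀¹ g(s)² ds − (1/(p+1))∫₀¹ |v(s)|^{p+1} ds if there exists g ∈ L²(0,1) with v(x) = ∫₀ˣ g(s) ds for all x ∈ [0,1], and S(v) = +∞ otherwise. Then S is sequentially lower semicontinuous with respect to uniform convergence: if (v_k) ⊆ C_D([0,1]) converges uniformly on [0,1] to v_∞ ∈ C_D([0,1]), then S(v_∞) ≤ liminf_{k→∞} S(v_k). -/

import Mathlib

open Set MeasureTheory

open Classical in
/-- The potential `S : C_D([0,1]) → ℝ ∪ {+∞}`: if `v` admits `g ∈ L²(0,1)` with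
`v(x) = ∫₀ˣ g(s) ds` on `[0,1]` then
`S(v) = (1/2)∫₀¹ g² − (1/(p+1))∫₀¹ |v|^{p+1}`, and `S(v) = +∞` otherwise. -/
noncomputable def potSE (p : ℝ) (v : ℝ → ℝ) : EReal :=
  if h : ∃ g : ℝ → ℝ,
      MemLp g 2 (volume.restrict (Ioc (0:ℝ) 1)) ∧
      ∀ x ∈ Icc (0:ℝ) 1, v x = ∫ s in (0:ℝ)..x, g s then
    (((1/2) * (∫ s in (0:ℝ)..1, h.choose s ^ 2)
      - (1/(p+1)) * ∫ s in (0:ℝ)..1, |v s| ^ (p + 1) : ℝ) : EReal)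
  else ⊤

open Filter
open scoped RealInnerProductSpace

noncomputable section Stmt9Aux

/-- dyadic point `j/2^n` -/
def xd (n j : ℕ) : ℝ := (j : ℝ) / 2 ^ n

lemma xd_nonneg (n j : ℕ) : 0 ≤ xd n j := by unfold xd; positivity

lemma xd_mono {n : ℕ} {j k : ℕ} (h : j ≤ k) : xd n j ≤ xd n k := by
  unfold xd
  have : (j:ℝ) ≤ k := by exact_mod_cast h
  gcongr

lemma xd_zero (n : ℕ) : xd n 0 = 0 := by simp [xd]

lemma xd_last (n : ℕ) : xd n (2 ^ n) = 1 := by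
  unfold xd; push_cast; rw [div_self (by positivity)]

lemma xd_le_one {n j : ℕ} (h : j ≤ 2 ^ n) : xd n j ≤ 1 := by
  calc xd n j ≤ xd n (2 ^ n) := xd_mono h
  _ = 1 := by rw [← xd_last n]

lemma xd_succ_sub (n j : ℕ) : xd n (j + 1) - xd n j = 1 / 2 ^ n := by
  unfold xd; push_cast; field_simp; ring

lemma xd_cast {n m : ℕ} (h : n ≤ m) (j : ℕ) : xd m (j * 2 ^ (m - n)) = xd n j := by
  unfold xd
  have h2 : (2 : ℝ) ^ m = 2 ^ n * 2 ^ (m - n) := by rw [← pow_add]; congr 1; omega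
  push_cast
  rw [h2, mul_comm ((2:ℝ)^n) _, mul_comm (j:ℝ) _, mul_div_mul_left _ _ (by positivity)]

lemma Ioc_xd_subset {n j : ℕ} (h : j + 1 ≤ 2 ^ n) :
    Ioc (xd n j) (xd n (j + 1)) ⊆ Ioc (0:ℝ) 1 :=
  Set.Ioc_subset_Ioc (xd_nonneg n j) (xd_le_one h)

lemma volume_Ioc_xd (n j : ℕ) :
    volume (Ioc (xd n j) (xd n (j + 1))) = ENNReal.ofReal (1 / 2 ^ n) := by
  rw [Real.volume_Ioc, xd_succ_sub]

lemma Ioc_xd_disjoint {n i j : ℕ} (h : i ≠ j) :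
    Ioc (xd n j) (xd n (j + 1)) ∩ Ioc (xd n i) (xd n (i + 1)) = ∅ := by
  rw [Set.Ioc_inter_Ioc, Set.Ioc_eq_empty]
  rw [not_lt]
  rcases lt_or_gt_of_ne h with hij | hij
  · calc min (xd n (j+1)) (xd n (i+1)) ≤ xd n (i+1) := min_le_right _ _
      _ ≤ xd n j := xd_mono hij
      _ ≤ max (xd n j) (xd n i) := le_max_left _ _
  · calc min (xd n (j+1)) (xd n (i+1)) ≤ xd n (j+1) := min_le_left _ _
      _ ≤ xd n i := xd_mono hij
      _ ≤ max (xd n j) (xd n i) := le_max_right _ _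

/-- increment of `f` over a dyadic cell -/
def Df (f : ℝ → ℝ) (n j : ℕ) : ℝ := f (xd n (j + 1)) - f (xd n j)

/-- the dyadic step approximation of the "derivative" of `f` at level `n` -/
def MM (f : ℝ → ℝ) (n : ℕ) : ℝ → ℝ := fun x =>
  ∑ j ∈ Finset.range (2 ^ n),
    Set.indicator (Ioc (xd n j) (xd n (j + 1))) (fun _ => 2 ^ n * Df f n j) x

/-- the energy of the dyadic approximation -/
def QQ (f : ℝ → ℝ) (n : ℕ) : ℝ := ∑ j ∈ Finset.range (2 ^ n), 2 ^ n * (Df f n j) ^ 2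

lemma integrable_ind (n j : ℕ) (c : ℝ) :
    Integrable (Set.indicator (Ioc (xd n j) (xd n (j + 1))) (fun _ => c)) volume := by
  rw [integrable_indicator_iff measurableSet_Ioc]
  exact integrableOn_const (by rw [volume_Ioc_xd]; exact ENNReal.ofReal_ne_top)

lemma integrable_MM (f : ℝ → ℝ) (n : ℕ) : Integrable (MM f n) volume := by
  unfold MM
  exact integrable_finset_sum _ fun j _ => integrable_ind n j _

lemma memLp_MM (f : ℝ → ℝ) (n : ℕ) (μ : Measure ℝ) [IsFiniteMeasure μ] :
    MemLp (MM f n) 2 μ := by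
  unfold MM
  refine memLp_finset_sum _ fun j _ => ?_
  exact memLp_indicator_const 2 measurableSet_Ioc (2 ^ n * Df f n j : ℝ)
    (Or.inr (measure_ne_top μ _))

/-- integral of `MM f n` over one of its own cells -/
lemma cell_integral (f : ℝ → ℝ) {n j : ℕ} (hj : j < 2 ^ n) :
    ∫ x in Ioc (xd n j) (xd n (j + 1)), MM f n x = Df f n j := by
  unfold MM
  rw [integral_finset_sum _ fun i _ => (integrable_ind n i _).restrict]
  rw [Finset.sum_eq_single_of_mem j (Finset.mem_range.2 hj)]
  · rw [setIntegral_indicator measurableSet_Ioc, Set.inter_self, setIntegral_const,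
      measureReal_def, volume_Ioc_xd, ENNReal.toReal_ofReal (by positivity)]
    simp only [smul_eq_mul]
    field_simp
  · intro i _ hij
    rw [setIntegral_indicator measurableSet_Ioc, Ioc_xd_disjoint hij]
    simp

/-- splitting an integral over a dyadic interval into cells -/
lemma sum_cell_integral (h : ℝ → ℝ) (hint : IntegrableOn h (Ioc (0:ℝ) 1) volume)
    (n : ℕ) (u : ℕ) : ∀ w, u ≤ w → w ≤ 2 ^ n →
    ∑ j ∈ Finset.Ico u w, (∫ x in Ioc (xd n j) (xd n (j + 1)), h x)
      = ∫ x in Ioc (xd n u) (xd n w), h x := by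
  intro w huw
  induction w, huw using Nat.le_induction with
  | base =>
    intro _
    simp [Set.Ioc_self]
  | succ w hw ih =>
    intro hw2
    have hw2' : w ≤ 2 ^ n := Nat.le_of_succ_le hw2
    rw [Finset.sum_Ico_succ_top hw, ih hw2']
    have hsplit : Ioc (xd n u) (xd n w) ∪ Ioc (xd n w) (xd n (w+1)) = Ioc (xd n u) (xd n (w+1)) :=
      Set.Ioc_union_Ioc_eq_Ioc (xd_mono hw) (xd_mono (Nat.le_succ w))
    rw [← hsplit, setIntegral_union ?dis measurableSet_Ioc ?i1 ?i2]
    case dis =>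
      rw [Set.Ioc_disjoint_Ioc]
      exact le_trans (min_le_left _ _) (le_max_right _ _)
    case i1 =>
      exact hint.mono_set (Set.Ioc_subset_Ioc (xd_nonneg n u) (xd_le_one hw2'))
    case i2 =>
      exact hint.mono_set (Set.Ioc_subset_Ioc (xd_nonneg n w) (xd_le_one hw2))

/-- telescoping sum of increments -/
lemma sum_Df (f : ℝ → ℝ) (m : ℕ) (u : ℕ) : ∀ w, u ≤ w →
    ∑ i ∈ Finset.Ico u w, Df f m i = f (xd m w) - f (xd m u) := by
  intro w huw
  induction w, huw using Nat.le_induction with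
  | base => simp
  | succ w hw ih =>
    rw [Finset.sum_Ico_succ_top hw, ih, Df]
    ring

/-- integral of a finer approximation over a coarser cell -/
lemma cell_integral_fine (f : ℝ → ℝ) {n m j : ℕ} (hnm : n ≤ m) (hj : j + 1 ≤ 2 ^ n) :
    ∫ x in Ioc (xd n j) (xd n (j + 1)), MM f m x = Df f n j := by
  have e1 : xd m (j * 2 ^ (m - n)) = xd n j := xd_cast hnm j
  have e2 : xd m ((j + 1) * 2 ^ (m - n)) = xd n (j + 1) := xd_cast hnm (j + 1)
  have hle : j * 2 ^ (m - n) ≤ (j + 1) * 2 ^ (m - n) :=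
    Nat.mul_le_mul_right _ (Nat.le_succ j)
  have hle2 : (j + 1) * 2 ^ (m - n) ≤ 2 ^ m := by
    calc (j + 1) * 2 ^ (m - n) ≤ 2 ^ n * 2 ^ (m - n) := Nat.mul_le_mul_right _ hj
    _ = 2 ^ m := by rw [← pow_add]; congr 1; omega
  rw [← e1, ← e2,
    ← sum_cell_integral (MM f m) ((integrable_MM f m).integrableOn) m _ _ hle hle2]
  have : ∀ i ∈ Finset.Ico (j * 2 ^ (m - n)) ((j + 1) * 2 ^ (m - n)),
      (∫ x in Ioc (xd m i) (xd m (i + 1)), MM f m x) = Df f m i := by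
    intro i hi
    rw [Finset.mem_Ico] at hi
    exact cell_integral f (lt_of_lt_of_le hi.2 hle2)
  rw [Finset.sum_congr rfl this, sum_Df f m _ _ hle, e1, e2, Df]

/-- integral of `MM f m` from `0` to a dyadic point -/
lemma integral_MM_Ioc_zero (f : ℝ → ℝ) {m w : ℕ} (hw : w ≤ 2 ^ m) :
    ∫ x in Ioc (0:ℝ) (xd m w), MM f m x = f (xd m w) - f 0 := by
  have h0 : (0:ℝ) = xd m 0 := (xd_zero m).symm
  conv_lhs => rw [h0]
  rw [← sum_cell_integral (MM f m) ((integrable_MM f m).integrableOn) m 0 w (Nat.zero_le w) hw]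
  have : ∀ i ∈ Finset.Ico 0 w,
      (∫ x in Ioc (xd m i) (xd m (i + 1)), MM f m x) = Df f m i := by
    intro i hi
    rw [Finset.mem_Ico] at hi
    exact cell_integral f (lt_of_lt_of_le hi.2 hw)
  rw [Finset.sum_congr rfl this, sum_Df f m 0 w (Nat.zero_le w), xd_zero]

/-- the key orthogonality computation: the inner product of a coarse approximation with a
finer one only depends on the coarse level. -/
lemma integral_MM_mul (f : ℝ → ℝ) {n m : ℕ} (hnm : n ≤ m) :
    ∫ x in Ioc (0:ℝ) 1, MM f n x * MM f m x = QQ f n := by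
  have key : ∀ x, MM f n x * MM f m x = ∑ j ∈ Finset.range (2 ^ n),
      Set.indicator (Ioc (xd n j) (xd n (j + 1)))
        (fun y => (2 ^ n * Df f n j) * MM f m y) x := by
    intro x
    rw [MM, Finset.sum_mul]
    refine Finset.sum_congr rfl fun j _ => ?_
    by_cases hx : x ∈ Ioc (xd n j) (xd n (j + 1)) <;> simp [hx]
  simp_rw [key]
  rw [integral_finset_sum _ fun j _ =>
    (((integrable_MM f m).const_mul _).indicator measurableSet_Ioc).restrict]
  rw [QQ]
  refine Finset.sum_congr rfl fun j hj => ?_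
  rw [setIntegral_indicator measurableSet_Ioc,
    Set.inter_eq_self_of_subset_right (Ioc_xd_subset (Finset.mem_range.1 hj)),
    MeasureTheory.integral_const_mul, cell_integral_fine f hnm (Finset.mem_range.1 hj)]
  ring

/-- Cauchy-Schwarz on an interval -/
lemma cs_interval {g : ℝ → ℝ} {a b : ℝ} (hab : a ≤ b)
    (hg : MemLp g 2 (volume.restrict (Ioc a b))) :
    (∫ x in Ioc a b, g x) ^ 2 ≤ (b - a) * ∫ x in Ioc a b, g x ^ 2 := by
  set μ' := volume.restrict (Ioc a b) with hμ'
  have hpq : Real.HolderConjugate 2 2 := Real.HolderConjugate.two_two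
  have hg2 : MemLp g (ENNReal.ofReal 2) μ' := by
    convert hg using 2; norm_num
  have h1 : MemLp (fun _ : ℝ => (1:ℝ)) (ENNReal.ofReal 2) μ' := by
    have : IsFiniteMeasure μ' := by
      constructor
      rw [hμ', Measure.restrict_apply_univ, Real.volume_Ioc]
      exact ENNReal.ofReal_lt_top
    exact memLp_const 1
  have hH := integral_mul_norm_le_Lp_mul_Lq hpq hg2 h1
  have e2' : ∀ y : ℝ, |y| ^ (2:ℝ) = y ^ 2 := fun y => by
    rw [show (2:ℝ) = ((2:ℕ):ℝ) by norm_num, Real.rpow_natCast, sq_abs]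
  simp only [Real.norm_eq_abs] at hH
  simp only [e2'] at hH
  simp only [abs_one, one_pow, mul_one, integral_const, smul_eq_mul, measureReal_def] at hH
  have e3 : (μ' univ).toReal = b - a := by
    rw [hμ', Measure.restrict_apply_univ, Real.volume_Ioc,
      ENNReal.toReal_ofReal (sub_nonneg.2 hab)]
  rw [e3] at hH
  have hA : (0:ℝ) ≤ ∫ x, g x ^ 2 ∂μ' :=
    integral_nonneg fun x => sq_nonneg _
  have hB : (0:ℝ) ≤ b - a := sub_nonneg.2 hab
  have habs : |∫ x, g x ∂μ'| ≤ (∫ x, g x ^ 2 ∂μ') ^ (1/(2:ℝ)) * (b - a) ^ (1/(2:ℝ)) := by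
    calc |∫ x, g x ∂μ'| ≤ ∫ x, |g x| ∂μ' := by
          simpa using norm_integral_le_integral_norm (μ := μ') g
    _ ≤ _ := hH
  have := pow_le_pow_left₀ (abs_nonneg _) habs 2
  rw [sq_abs] at this
  refine le_trans this (le_of_eq ?_)
  rw [mul_pow, ← Real.rpow_natCast ((∫ x, g x ^ 2 ∂μ') ^ (1/(2:ℝ))) 2,
    ← Real.rpow_natCast (((b:ℝ) - a) ^ (1/(2:ℝ))) 2,
    ← Real.rpow_mul hA, ← Real.rpow_mul hB]
  norm_num
  ring

/-- a.e. uniqueness: integrable functions on `(0,1]` with the same primitives on `[0,1]`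
agree a.e. -/
lemma rep_unique {g₁ g₂ : ℝ → ℝ}
    (h₁ : IntegrableOn g₁ (Ioc (0:ℝ) 1) volume) (h₂ : IntegrableOn g₂ (Ioc (0:ℝ) 1) volume)
    (h : ∀ x ∈ Icc (0:ℝ) 1, (∫ t in Ioc (0:ℝ) x, g₁ t) = ∫ t in Ioc (0:ℝ) x, g₂ t) :
    g₁ =ᵐ[volume.restrict (Ioc (0:ℝ) 1)] g₂ := by
  set μ := volume.restrict (Ioc (0:ℝ) 1) with hμdef
  haveI : IsFiniteMeasure μ := by
    constructor
    rw [hμdef, Measure.restrict_apply_univ, Real.volume_Ioc]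
    exact ENNReal.ofReal_lt_top
  set f : ℝ → ℝ := fun x => g₁ x - g₂ x with hfdef
  have hfint : IntegrableOn f (Ioc (0:ℝ) 1) volume := h₁.sub h₂
  have hint : Integrable f μ := hfint
  have hz : ∀ x ∈ Icc (0:ℝ) 1, (∫ t in Ioc (0:ℝ) x, f t) = 0 := by
    intro x hx
    have he : (∫ t in Ioc (0:ℝ) x, f t) =
        (∫ t in Ioc (0:ℝ) x, g₁ t) - ∫ t in Ioc (0:ℝ) x, g₂ t := by
      apply integral_sub
      · exact h₁.mono_set (Set.Ioc_subset_Ioc le_rfl hx.2)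
      · exact h₂.mono_set (Set.Ioc_subset_Ioc le_rfl hx.2)
    rw [he, h x hx, sub_self]
  have hz2 : ∀ a b : ℝ, (∫ t in Ioc a b ∩ Ioc (0:ℝ) 1, f t) = 0 := by
    intro a b
    rw [Set.Ioc_inter_Ioc]
    rcases le_or_gt (max a 0) (min b 1) with hab | hab
    · have h0 : (0:ℝ) ≤ max a 0 := le_max_right _ _
      have h1 : min b 1 ≤ 1 := min_le_right _ _
      have hmem1 : max a 0 ∈ Icc (0:ℝ) 1 := ⟨h0, le_trans hab h1⟩
      have hmem2 : min b 1 ∈ Icc (0:ℝ) 1 := ⟨le_trans h0 hab, h1⟩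
      have hsplit : Ioc (0:ℝ) (max a 0) ∪ Ioc (max a 0) (min b 1) = Ioc (0:ℝ) (min b 1) :=
        Set.Ioc_union_Ioc_eq_Ioc h0 hab
      have hdisj : Disjoint (Ioc (0:ℝ) (max a 0)) (Ioc (max a 0) (min b 1)) := by
        rw [Set.Ioc_disjoint_Ioc]
        exact le_trans (min_le_left _ _) (le_max_right _ _)
      have hi1 : IntegrableOn f (Ioc (0:ℝ) (max a 0)) volume :=
        hfint.mono_set (Set.Ioc_subset_Ioc le_rfl hmem1.2)
      have hi2 : IntegrableOn f (Ioc (max a 0) (min b 1)) volume :=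
        hfint.mono_set (Set.Ioc_subset_Ioc hmem1.1 hmem2.2)
      have hu := setIntegral_union hdisj measurableSet_Ioc hi1 hi2
      rw [hsplit, hz _ hmem2, hz _ hmem1] at hu
      linarith [hu]
    · rw [Set.Ioc_eq_empty (not_lt.2 hab.le)]
      simp
  set fp : ℝ → ℝ := fun x => max (f x) 0 with hfp
  set fm : ℝ → ℝ := fun x => max (-f x) 0 with hfm
  have hfpint : Integrable fp μ := hint.pos_part
  have hfmint : Integrable fm μ := hint.neg.pos_part
  have hmeas1 : AEMeasurable (fun x => ENNReal.ofReal (f x)) μ :=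
    hint.aemeasurable.ennreal_ofReal
  have hmeas2 : AEMeasurable (fun x => ENNReal.ofReal (-f x)) μ :=
    hint.neg.aemeasurable.ennreal_ofReal
  have hofrealp : ∀ x : ℝ, ENNReal.ofReal (f x) = ENNReal.ofReal (fp x) := by
    intro x
    rcases le_or_gt (f x) 0 with hx | hx
    · rw [hfp]; simp only [max_eq_right hx, ENNReal.ofReal_eq_zero.2 hx, ENNReal.ofReal_zero]
    · rw [hfp]; simp only [max_eq_left hx.le]
  have hofrealm : ∀ x : ℝ, ENNReal.ofReal (-f x) = ENNReal.ofReal (fm x) := by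
    intro x
    rcases le_or_gt (-f x) 0 with hx | hx
    · rw [hfm]; simp only [max_eq_right hx, ENNReal.ofReal_eq_zero.2 hx, ENNReal.ofReal_zero]
    · rw [hfm]; simp only [max_eq_left hx.le]
  have hlift : ∀ a b : ℝ,
      (∫⁻ x in Ioc a b, ENNReal.ofReal (f x) ∂μ) = ∫⁻ x in Ioc a b, ENNReal.ofReal (-f x) ∂μ := by
    intro a b
    have hres : μ.restrict (Ioc a b) = volume.restrict (Ioc a b ∩ Ioc (0:ℝ) 1) := by
      rw [hμdef, Measure.restrict_restrict measurableSet_Ioc]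
    have hip : Integrable fp (μ.restrict (Ioc a b)) := hfpint.restrict
    have him : Integrable fm (μ.restrict (Ioc a b)) := hfmint.restrict
    have hifr : Integrable f (μ.restrict (Ioc a b)) := hint.restrict
    have hsub : (∫ x in Ioc a b, fp x ∂μ) - (∫ x in Ioc a b, fm x ∂μ)
        = ∫ x in Ioc a b, f x ∂μ := by
      rw [← integral_sub hip him]
      refine integral_congr_ae (Filter.Eventually.of_forall fun x => ?_)
      rw [hfp, hfm]
      simp only [max_zero_sub_max_neg_zero_eq_self]
    have hzero : (∫ x in Ioc a b, f x ∂μ) = 0 := by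
      rw [hres]
      exact hz2 a b
    have hpos : (∫ x in Ioc a b, fp x ∂μ) = ∫ x in Ioc a b, fm x ∂μ := by
      rw [hzero] at hsub
      linarith [hsub]
    simp_rw [hofrealp, hofrealm]
    rw [← ofReal_integral_eq_lintegral_ofReal hip
        (Filter.Eventually.of_forall fun x => le_max_right _ _),
      ← ofReal_integral_eq_lintegral_ofReal him
        (Filter.Eventually.of_forall fun x => le_max_right _ _), hpos]
  have hext : μ.withDensity (fun x => ENNReal.ofReal (f x))
      = μ.withDensity (fun x => ENNReal.ofReal (-f x)) := by
    haveI hfinw : IsFiniteMeasure (μ.withDensity fun x => ENNReal.ofReal (f x)) := by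
      constructor
      rw [withDensity_apply _ MeasurableSet.univ, setLIntegral_univ]
      simp_rw [hofrealp]
      rw [← ofReal_integral_eq_lintegral_ofReal hfpint
        (Filter.Eventually.of_forall fun x => le_max_right _ _)]
      exact ENNReal.ofReal_lt_top
    refine MeasureTheory.Measure.ext_of_Ioc _ _ fun a b _ => ?_
    rw [withDensity_apply _ measurableSet_Ioc, withDensity_apply _ measurableSet_Ioc]
    exact hlift a b
  have hae : (fun x => ENNReal.ofReal (f x)) =ᵐ[μ] fun x => ENNReal.ofReal (-f x) := by
    rw [← withDensity_eq_iff_of_sigmaFinite hmeas1 hmeas2]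
    exact hext
  filter_upwards [hae] with x hx
  have hfx : f x = 0 := by
    rcases lt_trichotomy (f x) 0 with hc | hc | hc
    · exfalso
      rw [ENNReal.ofReal_eq_zero.2 hc.le] at hx
      have : (0:ℝ) < -f x := by linarith
      rw [eq_comm, ENNReal.ofReal_eq_zero] at hx
      linarith [hx]
    · exact hc
    · exfalso
      have : -f x < 0 := by linarith
      rw [ENNReal.ofReal_eq_zero.2 this.le, ENNReal.ofReal_eq_zero] at hx
      linarith [hx]
  have : g₁ x - g₂ x = 0 := hfx
  linarith [this]

lemma primitive_diff {g : ℝ → ℝ} (hgint : IntegrableOn g (Ioc (0:ℝ) 1) volume)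
    {a b : ℝ} (ha : 0 ≤ a) (hab : a ≤ b) (hb : b ≤ 1) :
    (∫ t in Ioc (0:ℝ) b, g t) - ∫ t in Ioc (0:ℝ) a, g t = ∫ t in Ioc a b, g t := by
  have hsplit : Ioc (0:ℝ) a ∪ Ioc a b = Ioc (0:ℝ) b := Set.Ioc_union_Ioc_eq_Ioc ha hab
  have hdisj : Disjoint (Ioc (0:ℝ) a) (Ioc a b) := by
    rw [Set.Ioc_disjoint_Ioc]
    exact le_trans (min_le_left _ _) (le_max_right _ _)
  have hu := setIntegral_union hdisj measurableSet_Ioc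
    (hgint.mono_set (Set.Ioc_subset_Ioc le_rfl (le_trans hab hb)))
    (hgint.mono_set (Set.Ioc_subset_Ioc ha hb))
  rw [hsplit] at hu
  linarith [hu]

/-- the dyadic energy of a function with an `L²` representation is dominated by the energy
of the representative. -/
lemma energy_lower {g w : ℝ → ℝ} (hg : MemLp g 2 (volume.restrict (Ioc (0:ℝ) 1)))
    (hrep : ∀ x ∈ Icc (0:ℝ) 1, w x = ∫ s in (0:ℝ)..x, g s) (n : ℕ) :
    QQ w n ≤ ∫ x in Ioc (0:ℝ) 1, g x ^ 2 := by
  haveI : IsFiniteMeasure (volume.restrict (Ioc (0:ℝ) 1)) := by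
    constructor
    rw [Measure.restrict_apply_univ, Real.volume_Ioc]
    exact ENNReal.ofReal_lt_top
  have hgint : IntegrableOn g (Ioc (0:ℝ) 1) volume := hg.integrable one_le_two
  have hg2int : IntegrableOn (fun x => g x ^ 2) (Ioc (0:ℝ) 1) volume := by
    have := hg.integrable_sq
    simpa [sq, IntegrableOn] using this
  have key : ∀ j : ℕ, j + 1 ≤ 2 ^ n →
      2 ^ n * (Df w n j) ^ 2 ≤ ∫ x in Ioc (xd n j) (xd n (j + 1)), g x ^ 2 := by
    intro j hj
    have hmem1 : xd n j ∈ Icc (0:ℝ) 1 := ⟨xd_nonneg n j, xd_le_one (Nat.le_of_succ_le hj)⟩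
    have hmem2 : xd n (j+1) ∈ Icc (0:ℝ) 1 := ⟨xd_nonneg n (j+1), xd_le_one hj⟩
    have hDf : Df w n j = ∫ t in Ioc (xd n j) (xd n (j+1)), g t := by
      rw [Df, hrep _ hmem1, hrep _ hmem2,
        intervalIntegral.integral_of_le hmem1.1, intervalIntegral.integral_of_le hmem2.1]
      exact primitive_diff hgint hmem1.1 (xd_mono (Nat.le_succ j)) hmem2.2
    have hcs := cs_interval (xd_mono (Nat.le_succ j))
      (hg.mono_measure (Measure.restrict_mono (Ioc_xd_subset hj) le_rfl))
    rw [← hDf, xd_succ_sub] at hcs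
    calc 2 ^ n * (Df w n j) ^ 2 ≤ 2 ^ n * (1 / 2 ^ n * ∫ x in Ioc (xd n j) (xd n (j+1)), g x ^ 2) := by
          have h2 : (0:ℝ) < 2 ^ n := by positivity
          exact mul_le_mul_of_nonneg_left hcs (le_of_lt h2)
    _ = ∫ x in Ioc (xd n j) (xd n (j+1)), g x ^ 2 := by field_simp
  calc QQ w n ≤ ∑ j ∈ Finset.range (2 ^ n), ∫ x in Ioc (xd n j) (xd n (j + 1)), g x ^ 2 := by
        rw [QQ]
        refine Finset.sum_le_sum fun j hj => key j (Finset.mem_range.1 hj)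
  _ = ∫ x in Ioc (0:ℝ) 1, g x ^ 2 := by
        rw [← Nat.Ico_zero_eq_range,
          sum_cell_integral _ hg2int n 0 (2 ^ n) (Nat.zero_le _) le_rfl, xd_zero, xd_last]

end Stmt9Aux

lemma potSE_eq (p : ℝ) (u : ℝ → ℝ)
    (hR : ∃ g : ℝ → ℝ, MemLp g 2 (volume.restrict (Ioc (0:ℝ) 1)) ∧
       ∀ x ∈ Icc (0:ℝ) 1, u x = ∫ s in (0:ℝ)..x, g s) :
    potSE p u = (((1/2) * (∫ s in (0:ℝ)..1, hR.choose s ^ 2)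
      - (1/(p+1)) * ∫ s in (0:ℝ)..1, |u s| ^ (p + 1) : ℝ) : EReal) := by
  rw [potSE, dif_pos hR]

lemma potSE_top (p : ℝ) (u : ℝ → ℝ)
    (hR : ¬ ∃ g : ℝ → ℝ, MemLp g 2 (volume.restrict (Ioc (0:ℝ) 1)) ∧
       ∀ x ∈ Icc (0:ℝ) 1, u x = ∫ s in (0:ℝ)..x, g s) :
    potSE p u = ⊤ := by
  rw [potSE, dif_neg hR]

/-- The potential `S` is sequentially lower semicontinuous with respect to uniform
convergence on `C_D([0,1])`. -/
theorem stmt9 (p : ℝ) (hp : 1 < p) (v : ℕ → ℝ → ℝ) (vinf : ℝ → ℝ)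
    (hv : ∀ k, ContinuousOn (v k) (Icc (0:ℝ) 1) ∧ v k 0 = 0 ∧ v k 1 = 0)
    (hvinf : ContinuousOn vinf (Icc (0:ℝ) 1) ∧ vinf 0 = 0 ∧ vinf 1 = 0)
    (hconv : TendstoUniformlyOn v vinf Filter.atTop (Icc (0:ℝ) 1)) :
    potSE p vinf ≤ Filter.liminf (fun k => potSE p (v k)) Filter.atTop := by
  classical
  haveI hfm : IsFiniteMeasure (volume.restrict (Ioc (0:ℝ) 1)) := by
    constructor
    rw [Measure.restrict_apply_univ, Real.volume_Ioc]
    exact ENNReal.ofReal_lt_top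
  set L := Filter.liminf (fun k => potSE p (v k)) Filter.atTop with hLdef
  rcases eq_top_or_lt_top L with htop | hlt
  · rw [htop]; exact le_top
  set cinf : ℝ := (1/(p+1)) * ∫ s in (0:ℝ)..1, |vinf s| ^ (p + 1) with hcinf
  set ck : ℕ → ℝ := fun k => (1/(p+1)) * ∫ s in (0:ℝ)..1, |v k s| ^ (p + 1) with hckdef
  have hp1 : (0:ℝ) ≤ p + 1 := by linarith
  -- Step 1 : convergence of the lower-order terms
  have hc : Tendsto ck atTop (nhds cinf) := by
    have hpow : Continuous (fun t : ℝ => |t| ^ (p+1)) :=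
      Continuous.rpow_const continuous_abs (fun _ => Or.inr hp1)
    obtain ⟨B, hB⟩ := isCompact_Icc.exists_bound_of_continuousOn hvinf.1
    have hint : Tendsto (fun k => ∫ x in Ioc (0:ℝ) 1, |v k x| ^ (p+1))
        atTop (nhds (∫ x in Ioc (0:ℝ) 1, |vinf x| ^ (p+1))) := by
      apply tendsto_integral_filter_of_dominated_convergence
        (bound := fun _ => (B+1) ^ (p+1))
      · refine Eventually.of_forall fun k => ?_
        exact (hpow.comp_continuousOn ((hv k).1.mono Set.Ioc_subset_Icc_self)).aestronglyMeasurable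
          measurableSet_Ioc
      · have h1 := Metric.tendstoUniformlyOn_iff.1 hconv 1 one_pos
        refine h1.mono fun k hk => ?_
        refine (ae_restrict_mem measurableSet_Ioc).mono fun x hx => ?_
        have hxI : x ∈ Icc (0:ℝ) 1 := Set.Ioc_subset_Icc_self hx
        have hb1 : |v k x| ≤ B + 1 := by
          have h2 := hk x hxI
          rw [Real.dist_eq] at h2
          have h3 := hB x hxI
          rw [Real.norm_eq_abs] at h3
          have h4 : |v k x| - |vinf x| ≤ |v k x - vinf x| := abs_sub_abs_le_abs_sub _ _
          rw [abs_sub_comm] at h4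
          linarith
        rw [Real.norm_eq_abs, abs_of_nonneg (Real.rpow_nonneg (abs_nonneg _) _)]
        exact Real.rpow_le_rpow (abs_nonneg _) hb1 hp1
      · exact integrable_const _
      · refine (ae_restrict_mem measurableSet_Ioc).mono fun x hx => ?_
        have hxI : x ∈ Icc (0:ℝ) 1 := Set.Ioc_subset_Icc_self hx
        exact (hpow.continuousAt.tendsto).comp (hconv.tendsto_at hxI)
    rw [hckdef, hcinf]
    simp only [intervalIntegral.integral_of_le (zero_le_one (α := ℝ))]
    exact hint.const_mul _
  -- Step 2: frequently there is a representation with controlled energy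
  have hfreqE : ∀ b : ℝ, L < (b : EReal) → ∃ᶠ k in atTop, ∃ g : ℝ → ℝ,
      MemLp g 2 (volume.restrict (Ioc (0:ℝ) 1)) ∧
      (∀ x ∈ Icc (0:ℝ) 1, v k x = ∫ s in (0:ℝ)..x, g s) ∧
      (∫ x in Ioc (0:ℝ) 1, g x ^ 2) < 2 * (b + ck k) := by
    intro b hb
    rw [hLdef] at hb
    have hfr := Filter.frequently_lt_of_liminf_lt (by isBoundedDefault) hb
    refine hfr.mono fun k hk => ?_
    by_cases hR : ∃ g : ℝ → ℝ, MemLp g 2 (volume.restrict (Ioc (0:ℝ) 1)) ∧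
        ∀ x ∈ Icc (0:ℝ) 1, v k x = ∫ s in (0:ℝ)..x, g s
    · obtain ⟨hg1, hg2⟩ := hR.choose_spec
      refine ⟨hR.choose, hg1, hg2, ?_⟩
      rw [potSE_eq p (v k) hR, EReal.coe_lt_coe_iff] at hk
      have hfold : (1/(p+1)) * ∫ s in (0:ℝ)..1, |v k s| ^ (p+1) = ck k := by rw [hckdef]
      rw [hfold] at hk
      rw [← intervalIntegral.integral_of_le (zero_le_one (α := ℝ))]
      linarith
    · rw [potSE_top p (v k) hR] at hk
      exact absurd hk (by simp)
  -- Step 3: bound on the dyadic energies of vinf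
  have hQb : ∀ b : ℝ, L < (b:EReal) → ∀ n, QQ vinf n ≤ 2 * (b + cinf) := by
    intro b hb n
    refine le_of_forall_pos_le_add fun ε hε => ?_
    have hψ : Tendsto (fun k => QQ (v k) n) atTop (nhds (QQ vinf n)) := by
      unfold QQ Df
      refine tendsto_finset_sum _ fun j hj => ?_
      rw [Finset.mem_range] at hj
      have h1 : Tendsto (fun k => v k (xd n (j+1))) atTop (nhds (vinf (xd n (j+1)))) :=
        hconv.tendsto_at ⟨xd_nonneg _ _, xd_le_one hj⟩
      have h2 : Tendsto (fun k => v k (xd n j)) atTop (nhds (vinf (xd n j))) :=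
        hconv.tendsto_at ⟨xd_nonneg _ _, xd_le_one (le_of_lt hj)⟩
      exact ((h1.sub h2).pow 2).const_mul _
    have hev1 : ∀ᶠ k in atTop, |QQ (v k) n - QQ vinf n| < ε/2 := by
      obtain ⟨N, hN⟩ := Metric.tendsto_atTop.1 hψ (ε/2) (by positivity)
      refine eventually_atTop.2 ⟨N, fun k hk => ?_⟩
      have := hN k hk; rwa [Real.dist_eq] at this
    have hev2 : ∀ᶠ k in atTop, ck k < cinf + ε/4 := by
      obtain ⟨N, hN⟩ := Metric.tendsto_atTop.1 hc (ε/4) (by positivity)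
      refine eventually_atTop.2 ⟨N, fun k hk => ?_⟩
      have := hN k hk
      rw [Real.dist_eq, abs_lt] at this
      linarith [this.2]
    obtain ⟨k, ⟨g, hgL2, hgrep, hgE⟩, h1, h2⟩ :=
      ((hfreqE b hb).and_eventually (hev1.and hev2)).exists
    have hlow := energy_lower hgL2 hgrep n
    rw [abs_lt] at h1
    linarith [h1.1, h1.2]
  -- Step 4: construct the weak limit in L²
  obtain ⟨b₀, hb₀, _⟩ := EReal.exists_between_coe_real hlt
  set F : ℕ → Lp ℝ 2 (volume.restrict (Ioc (0:ℝ) 1)) :=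
    fun n => (memLp_MM vinf n _).toLp (MM vinf n) with hFdef
  have hFinner : ∀ n m : ℕ, n ≤ m → (⟪F n, F m⟫ : ℝ) = QQ vinf n := by
    intro n m hnm
    rw [hFdef, MeasureTheory.L2.inner_def, ← integral_MM_mul vinf hnm]
    refine integral_congr_ae ?_
    filter_upwards [(memLp_MM vinf n (volume.restrict (Ioc (0:ℝ) 1))).coeFn_toLp,
      (memLp_MM vinf m (volume.restrict (Ioc (0:ℝ) 1))).coeFn_toLp] with a e1 e2
    rw [e1, e2]
    simp [RCLike.inner_apply, mul_comm]
  have hnormsq : ∀ n m : ℕ, n ≤ m → ‖F m - F n‖^2 = QQ vinf m - QQ vinf n := by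
    intro n m hnm
    have e1 := hFinner n m hnm
    have e2 : (⟪F m, F n⟫ : ℝ) = QQ vinf n := by rw [real_inner_comm]; exact e1
    have e3 := hFinner m m le_rfl
    have e4 := hFinner n n le_rfl
    rw [← real_inner_self_eq_norm_sq, inner_sub_sub_self, e1, e2, e3, e4]
    ring
  have hQmono : Monotone (QQ vinf) := by
    intro n m hnm
    have h1 := hnormsq n m hnm
    have h2 := sq_nonneg ‖F m - F n‖
    rw [h1] at h2
    linarith
  have hbdd : BddAbove (Set.range (QQ vinf)) := by
    refine ⟨2*(b₀ + cinf), ?_⟩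
    rintro _ ⟨n, rfl⟩
    exact hQb b₀ hb₀ n
  set Ql : ℝ := ⨆ n, QQ vinf n with hQldef
  have hQtend : Tendsto (QQ vinf) atTop (nhds Ql) := tendsto_atTop_ciSup hQmono hbdd
  have hQl_le : ∀ b : ℝ, L < (b:EReal) → Ql ≤ 2*(b + cinf) := fun b hb => ciSup_le (hQb b hb)
  have hcauchy : CauchySeq F := by
    rw [Metric.cauchySeq_iff']
    intro ε hε
    obtain ⟨N, hN⟩ := Metric.cauchySeq_iff'.1 hQtend.cauchySeq (ε^2) (by positivity)
    refine ⟨N, fun n hn => ?_⟩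
    have h1 := hnormsq N n hn
    have h2 := hN n hn
    rw [Real.dist_eq, abs_lt] at h2
    rw [dist_eq_norm]
    have h3 : ‖F n - F N‖^2 < ε^2 := by rw [h1]; linarith [h2.2]
    exact lt_of_pow_lt_pow_left₀ 2 (le_of_lt hε) h3
  obtain ⟨G0, hG0⟩ := cauchySeq_tendsto_of_complete hcauchy
  have hGinner : (⟪G0, G0⟫ : ℝ) = Ql := by
    have h1 : Tendsto (fun n => (⟪F n, F n⟫ : ℝ)) atTop (nhds ⟪G0, G0⟫) :=
      hG0.inner hG0
    have h2 : (fun n => (⟪F n, F n⟫ : ℝ)) = QQ vinf := funext fun n => hFinner n n le_rfl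
    rw [h2] at h1
    exact tendsto_nhds_unique h1 hQtend
  -- Step 5: inner products with indicators, dyadic representation
  have hχmem : ∀ y : ℝ, MemLp (Set.indicator (Ioc (0:ℝ) y) (fun _ => (1:ℝ))) 2
      (volume.restrict (Ioc (0:ℝ) 1)) :=
    fun y => memLp_indicator_const 2 measurableSet_Ioc 1 (Or.inr (measure_ne_top _ _))
  have hip : ∀ y : ℝ, y ≤ 1 → ∀ 𝔣 : Lp ℝ 2 (volume.restrict (Ioc (0:ℝ) 1)),
      (⟪𝔣, (hχmem y).toLp (Set.indicator (Ioc (0:ℝ) y) (fun _ => (1:ℝ)))⟫ : ℝ)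
        = ∫ x in Ioc (0:ℝ) y, 𝔣 x ∂volume := by
    intro y hy 𝔣
    rw [MeasureTheory.L2.inner_def]
    have hcongr : ∀ᵐ a ∂(volume.restrict (Ioc (0:ℝ) 1)),
        (⟪𝔣 a, ((hχmem y).toLp (Set.indicator (Ioc (0:ℝ) y) (fun _ => (1:ℝ)))) a⟫ : ℝ)
          = Set.indicator (Ioc (0:ℝ) y) (fun x => 𝔣 x) a := by
      filter_upwards [(hχmem y).coeFn_toLp] with a e1
      rw [e1]
      by_cases ha : a ∈ Ioc (0:ℝ) y <;> simp [ha, RCLike.inner_apply]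
    rw [integral_congr_ae hcongr, integral_indicator measurableSet_Ioc,
      Measure.restrict_restrict measurableSet_Ioc,
      Set.inter_eq_self_of_subset_left (Set.Ioc_subset_Ioc le_rfl hy)]
  have hdyad : ∀ m w : ℕ, w ≤ 2^m →
      (∫ x in Ioc (0:ℝ) (xd m w), G0 x ∂volume) = vinf (xd m w) := by
    intro m w hw
    have hkey : ∀ n : ℕ, m ≤ n →
        (⟪F n, (hχmem (xd m w)).toLp (Set.indicator (Ioc (0:ℝ) (xd m w)) (fun _ => (1:ℝ)))⟫ : ℝ)
          = vinf (xd m w) := by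
      intro n hn
      rw [hip (xd m w) (xd_le_one hw) (F n)]
      have e1 : ∀ᵐ x ∂(volume.restrict (Ioc (0:ℝ) (xd m w))), (F n) x = MM vinf n x :=
        ae_restrict_of_ae_restrict_of_subset (Set.Ioc_subset_Ioc le_rfl (xd_le_one hw))
          ((memLp_MM vinf n (volume.restrict (Ioc (0:ℝ) 1))).coeFn_toLp)
      rw [integral_congr_ae e1]
      have hcast : xd n (w * 2 ^ (n - m)) = xd m w := xd_cast hn w
      have hwn : w * 2 ^ (n - m) ≤ 2 ^ n := by
        calc w * 2^(n-m) ≤ 2^m * 2^(n-m) := Nat.mul_le_mul_right _ hw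
        _ = 2^n := by rw [← pow_add]; congr 1; omega
      rw [← hcast, integral_MM_Ioc_zero vinf hwn, hcast, hvinf.2.1, sub_zero]
    have h1 : Tendsto (fun n => (⟪F n,
        (hχmem (xd m w)).toLp (Set.indicator (Ioc (0:ℝ) (xd m w)) (fun _ => (1:ℝ)))⟫ : ℝ)) atTop
        (nhds ⟪G0, (hχmem (xd m w)).toLp (Set.indicator (Ioc (0:ℝ) (xd m w)) (fun _ => (1:ℝ)))⟫) :=
      hG0.inner tendsto_const_nhds
    have h2 : Tendsto (fun n => (⟪F n,
        (hχmem (xd m w)).toLp (Set.indicator (Ioc (0:ℝ) (xd m w)) (fun _ => (1:ℝ)))⟫ : ℝ)) atTop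
        (nhds (vinf (xd m w))) := by
      refine Tendsto.congr' ?_ tendsto_const_nhds
      exact eventually_atTop.2 ⟨m, fun n hn => (hkey n hn).symm⟩
    have h3 := tendsto_nhds_unique h1 h2
    rw [← h3, hip (xd m w) (xd_le_one hw) G0]
  -- Step 6: representation of vinf by G0
  have hGIoc : IntegrableOn (⇑G0) (Ioc (0:ℝ) 1) volume := (Lp.memLp G0).integrable one_le_two
  have hGIcc : IntegrableOn (⇑G0) (Icc (0:ℝ) 1) volume :=
    hGIoc.congr_set_ae Ioc_ae_eq_Icc.symm
  have hW : ContinuousOn (fun x => ∫ t in Ioc (0:ℝ) x, G0 t) (Icc (0:ℝ) 1) :=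
    intervalIntegral.continuousOn_primitive hGIcc
  have hrepinf : ∀ x ∈ Icc (0:ℝ) 1, vinf x = ∫ s in (0:ℝ)..x, G0 s := by
    intro x hx
    rw [intervalIntegral.integral_of_le hx.1]
    set xs : ℕ → ℝ := fun m => xd m (⌊x * 2^m⌋₊) with hxsdef
    have hfl : ∀ m : ℕ, (⌊x * 2^m⌋₊ : ℕ) ≤ 2^m := by
      intro m
      have hle : x * 2^m ≤ ((2^m : ℕ) : ℝ) := by
        push_cast
        calc x * 2^m ≤ 1 * 2^m := by
              have : (0:ℝ) ≤ 2^m := by positivity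
              exact mul_le_mul_of_nonneg_right hx.2 this
        _ = 2^m := one_mul _
      calc ⌊x * 2^m⌋₊ ≤ ⌊((2^m : ℕ) : ℝ)⌋₊ := Nat.floor_mono hle
      _ = 2^m := Nat.floor_natCast _
    have hxs_mem : ∀ m, xs m ∈ Icc (0:ℝ) 1 := fun m => ⟨xd_nonneg _ _, xd_le_one (hfl m)⟩
    have hxs_le : ∀ m, xs m ≤ x := by
      intro m
      simp only [hxsdef]
      have h1 : (⌊x * 2^m⌋₊ : ℝ) ≤ x * 2^m := Nat.floor_le (mul_nonneg hx.1 (by positivity))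
      unfold xd
      rw [div_le_iff₀ (by positivity : (0:ℝ) < 2^m)]
      exact h1
    have hxs_ge : ∀ m, x - 1/2^m ≤ xs m := by
      intro m
      have h1 : x * 2^m < ⌊x * 2^m⌋₊ + 1 := Nat.lt_floor_add_one _
      simp only [hxsdef]
      unfold xd
      rw [le_div_iff₀ (by positivity : (0:ℝ) < 2^m)]
      have : (x - 1/2^m) * 2^m = x * 2^m - 1 := by field_simp
      rw [this]
      linarith
    have hxs_tend : Tendsto xs atTop (nhds x) := by
      have hup : Tendsto (fun m : ℕ => x - 1/2^m) atTop (nhds x) := by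
        have h2 : Tendsto (fun m : ℕ => (1:ℝ)/2^m) atTop (nhds 0) := by
          simp_rw [one_div, ← inv_pow]
          exact tendsto_pow_atTop_nhds_zero_of_lt_one (by norm_num) (by norm_num)
        have := tendsto_const_nhds (x := x) (f := atTop (α := ℕ)) |>.sub h2
        simpa using this
      exact tendsto_of_tendsto_of_tendsto_of_le_of_le hup tendsto_const_nhds hxs_ge hxs_le
    have heqm : ∀ m, (∫ t in Ioc (0:ℝ) (xs m), G0 t) = vinf (xs m) := fun m => hdyad m _ (hfl m)
    have hWt : Tendsto (fun m => ∫ t in Ioc (0:ℝ) (xs m), G0 t) atTop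
        (nhds (∫ t in Ioc (0:ℝ) x, G0 t)) := by
      refine ((hW.continuousWithinAt hx).tendsto).comp ?_
      exact tendsto_nhdsWithin_of_tendsto_nhds_of_eventually_within xs hxs_tend
        (Eventually.of_forall hxs_mem)
    have hvt : Tendsto (fun m => vinf (xs m)) atTop (nhds (vinf x)) := by
      refine ((hvinf.1.continuousWithinAt hx).tendsto).comp ?_
      exact tendsto_nhdsWithin_of_tendsto_nhds_of_eventually_within xs hxs_tend
        (Eventually.of_forall hxs_mem)
    have := tendsto_nhds_unique (hWt.congr heqm) hvt
    exact this.symm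
  -- Step 7: conclusion
  have hEx : ∃ g : ℝ → ℝ, MemLp g 2 (volume.restrict (Ioc (0:ℝ) 1)) ∧
      ∀ x ∈ Icc (0:ℝ) 1, vinf x = ∫ s in (0:ℝ)..x, g s := ⟨⇑G0, Lp.memLp G0, hrepinf⟩
  rw [potSE_eq p vinf hEx]
  obtain ⟨hgL2, hgrep⟩ := hEx.choose_spec
  have hsame : hEx.choose =ᵐ[volume.restrict (Ioc (0:ℝ) 1)] ⇑G0 := by
    refine rep_unique (hgL2.integrable one_le_two) hGIoc fun x hx => ?_
    have e1 := hgrep x hx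
    have e2 := hrepinf x hx
    rw [intervalIntegral.integral_of_le hx.1] at e1 e2
    rw [← e1, ← e2]
  have hval : (∫ s in (0:ℝ)..1, hEx.choose s ^ 2) = Ql := by
    rw [intervalIntegral.integral_of_le (zero_le_one (α := ℝ))]
    have e1 : (∫ x in Ioc (0:ℝ) 1, hEx.choose x ^2 ∂volume) = ∫ x in Ioc (0:ℝ) 1, G0 x ^2 ∂volume := by
      refine integral_congr_ae ?_
      filter_upwards [hsame] with y hy
      rw [hy]
    rw [e1, ← hGinner, MeasureTheory.L2.inner_def]
    refine (integral_congr_ae (Eventually.of_forall fun a => ?_)).symm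
    simp [RCLike.inner_apply, sq]
  rw [hval, ← hcinf]
  by_contra hcon
  rw [not_le] at hcon
  obtain ⟨b, hb1, hb2⟩ := EReal.exists_between_coe_real hcon
  rw [EReal.coe_lt_coe_iff] at hb2
  have := hQl_le b hb1
  linarith
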